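/- For sub-normalized states ρ, σ, σ' on a finite-dimensional Hilbert space, |F(ρ,σ) - F(ρ,σ')| ≤ 2|√F(ρ,σ) - √F(ρ,σ')| ≤ 2√‖σ - σ'‖₁. -/

import Mathlib

open Matrix
open scoped ComplexOrder Classical

/-- The old Mathlib `Matrix.PosSemidef.sqrt` (removed since), with its original definition. -/
noncomputable def posSemidefSqrt {n : Type*} [Fintype n] [DecidableEq n] {A : Matrix n n ℂ}
    (hA : A.PosSemidef) : Matrix n n ℂ :=
  hA.1.eigenvectorUnitary.1 * diagonal ((↑) ∘ (√·) ∘ hA.1.eigenvalues) *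
    (star hA.1.eigenvectorUnitary : Matrix n n ℂ)

/-- The trace norm `‖X‖₁ = Tr √(XᴴX)` of a complex matrix. -/
noncomputable def traceNorm {n : Type*} [Fintype n] [DecidableEq n] (X : Matrix n n ℂ) : ℝ :=
  ((posSemidefSqrt (Matrix.posSemidef_conjTranspose_mul_self X)).trace).re

/-- The positive semidefinite square root, extended by `0` off the PSD cone. -/
noncomputable def msqrt {n : Type*} [Fintype n] [DecidableEq n] (X : Matrix n n ℂ) : Matrix n n ℂ :=
  if h : X.PosSemidef then posSemidefSqrt h else 0

/-- The fidelity `F(ρ,σ) = ‖√ρ √σ‖₁²`. -/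
noncomputable def fidelity {n : Type*} [Fintype n] [DecidableEq n] (ρ σ : Matrix n n ℂ) : ℝ :=
  (traceNorm (msqrt ρ * msqrt σ)) ^ 2

section Aux
set_option linter.unusedSectionVars false
set_option maxHeartbeats 1000000
variable {n : Type*} [Fintype n] [DecidableEq n]

lemma Matrix.IsHermitian.star_mul_self_mul_eq_diagonal {A : Matrix n n ℂ} (hA : A.IsHermitian) :
    star (hA.eigenvectorUnitary : Matrix n n ℂ) * A * (hA.eigenvectorUnitary : Matrix n n ℂ)
      = diagonal (RCLike.ofReal ∘ hA.eigenvalues) := by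
  have := hA.conjStarAlgAut_star_eigenvectorUnitary
  rw [Unitary.conjStarAlgAut_apply] at this
  simpa using this

lemma Matrix.PosSemidef.posSemidef_sqrt {A : Matrix n n ℂ} (hA : A.PosSemidef) :
    (posSemidefSqrt hA).PosSemidef := by
  unfold posSemidefSqrt
  rw [Matrix.star_eq_conjTranspose]
  apply Matrix.PosSemidef.mul_mul_conjTranspose_same
  refine posSemidef_diagonal_iff.mpr fun i => ?_
  exact Complex.zero_le_real.mpr (Real.sqrt_nonneg _)

lemma Matrix.PosSemidef.sqrt_mul_self {A : Matrix n n ℂ} (hA : A.PosSemidef) :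
    posSemidefSqrt hA * posSemidefSqrt hA = A := by
  have hs := hA.1.spectral_theorem
  rw [Unitary.conjStarAlgAut_apply] at hs
  have hU : star (hA.1.eigenvectorUnitary : Matrix n n ℂ) * hA.1.eigenvectorUnitary = 1 :=
    Unitary.coe_star_mul_self _
  unfold posSemidefSqrt
  conv_rhs => rw [hs]
  set U : Matrix n n ℂ := (hA.1.eigenvectorUnitary : Matrix n n ℂ)
  have e : ∀ D : Matrix n n ℂ, U * D * star U * (U * D * star U) = U * (D * (star U * U) * D) * star U := by
    intro D; noncomm_ring
  rw [e, hU, mul_one, diagonal_mul_diagonal]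
  congr 3
  funext i
  simp only [Function.comp_apply]
  rw [← Complex.ofReal_mul, Real.mul_self_sqrt (hA.eigenvalues_nonneg i)]
  rfl

lemma star_mul_self_re (z : ℂ) : (star z * z).re = ‖z‖^2 := by
  rw [Complex.star_def, ← Complex.normSq_eq_conj_mul_self]; simp [Complex.sq_norm]

lemma dot_self_eq_re (v : n → ℂ) : star v ⬝ᵥ v = ((star v ⬝ᵥ v).re : ℂ) := by
  simp only [dotProduct, Pi.star_apply, Complex.re_sum, Complex.ofReal_sum]
  congr 1; ext i
  rw [Complex.star_def, ← Complex.normSq_eq_conj_mul_self]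
  simp

lemma dot_self_re_nonneg (v : n → ℂ) : 0 ≤ (star v ⬝ᵥ v).re := by
  simp only [dotProduct, Pi.star_apply, Complex.re_sum]
  refine Finset.sum_nonneg fun i _ => ?_
  rw [Complex.star_def, ← Complex.normSq_eq_conj_mul_self]
  simpa using Complex.normSq_nonneg (v i)

lemma dot_self_re_eq_norm (a : n → ℂ) : (star a ⬝ᵥ a).re = ∑ i, ‖a i‖^2 := by
  simp only [dotProduct, Pi.star_apply, Complex.re_sum]
  exact Finset.sum_congr rfl fun i _ => star_mul_self_re _

lemma cs_dot (a b : n → ℂ) :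
    (star a ⬝ᵥ b).re ≤ Real.sqrt ((star a ⬝ᵥ a).re) * Real.sqrt ((star b ⬝ᵥ b).re) := by
  let A : EuclideanSpace ℂ n := WithLp.toLp 2 a
  let B : EuclideanSpace ℂ n := WithLp.toLp 2 b
  have h1 : @inner ℂ _ _ A B = star a ⬝ᵥ b := by
    simp [A, B, PiLp.inner_apply, RCLike.inner_apply, dotProduct, mul_comm]
  have hA : ‖A‖ = Real.sqrt ((star a ⬝ᵥ a).re) := by
    simp only [A, EuclideanSpace.norm_eq, dot_self_re_eq_norm, WithLp.ofLp_toLp]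
  have hB : ‖B‖ = Real.sqrt ((star b ⬝ᵥ b).re) := by
    simp only [B, EuclideanSpace.norm_eq, dot_self_re_eq_norm, WithLp.ofLp_toLp]
  calc (star a ⬝ᵥ b).re = (@inner ℂ _ _ A B).re := by rw [h1]
    _ ≤ ‖@inner ℂ _ _ A B‖ := Complex.re_le_norm _
    _ ≤ ‖A‖ * ‖B‖ := norm_inner_le_norm A B
    _ = _ := by rw [hA, hB]

lemma trace_unitary_conj {V : Matrix n n ℂ} (hV : V ∈ unitaryGroup n ℂ) (M : Matrix n n ℂ) :
    (V * M * star V).trace = M.trace := by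
  rw [trace_mul_cycle, mem_unitaryGroup_iff'.mp hV, one_mul]

lemma traceNorm_eq_sum (X : Matrix n n ℂ) :
    traceNorm X = ∑ i, Real.sqrt ((Matrix.posSemidef_conjTranspose_mul_self X).1.eigenvalues i) := by
  unfold traceNorm posSemidefSqrt
  rw [trace_unitary_conj (Matrix.mem_unitaryGroup_iff'.mpr (Unitary.coe_star_mul_self _))]
  simp [trace_diagonal, Complex.re_sum]

lemma conjTranspose_mul_diag (A B : Matrix n n ℂ) (i : n) :
    (Aᴴ * B) i i = star (Aᵀ i) ⬝ᵥ Bᵀ i := by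
  simp [mul_apply, dotProduct, conjTranspose_apply, transpose_apply]

lemma psd_diag_re_nonneg {M : Matrix n n ℂ} (hM : M.PosSemidef) (i : n) :
    0 ≤ (M i i).re := by
  have h := hM.dotProduct_mulVec_nonneg (Pi.single i 1)
  have e : star (Pi.single i 1 : n → ℂ) ⬝ᵥ M *ᵥ Pi.single i 1 = M i i := by
    simp [dotProduct, mulVec_single, Pi.single_apply, apply_ite]
  rw [e] at h
  exact (Complex.le_def.mp h).1

/-- Core duality bound: `Re Tr (W X) ≤ ‖X‖₁` when `W Wᴴ ≤ 1`. -/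
lemma re_trace_mul_le_traceNorm (X W : Matrix n n ℂ) (hW : (1 - W * Wᴴ).PosSemidef) :
    ((W * X).trace).re ≤ traceNorm X := by
  set hX := Matrix.posSemidef_conjTranspose_mul_self X with hhX
  set V : Matrix n n ℂ := (hX.1.eigenvectorUnitary : Matrix n n ℂ) with hV
  have hVmem : V ∈ unitaryGroup n ℂ := hX.1.eigenvectorUnitary.2
  set d := hX.1.eigenvalues with hd
  set A : Matrix n n ℂ := Wᴴ * V with hA
  set B : Matrix n n ℂ := X * V with hB
  -- rewrite trace in eigenbasis
  have h1 : (W * X).trace = (Aᴴ * B).trace := by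
    have : Aᴴ * B = star V * (W * X) * V := by
      simp only [hA, hB, conjTranspose_mul, conjTranspose_conjTranspose,
        Matrix.star_eq_conjTranspose]
      noncomm_ring
    rw [this, trace_mul_cycle, ← mul_assoc, mem_unitaryGroup_iff.mp hVmem, one_mul]
  have hAA : Aᴴ * A = Vᴴ * ((W * Wᴴ) * V) := by
    simp only [hA, conjTranspose_mul, conjTranspose_conjTranspose,
      Matrix.star_eq_conjTranspose]
    noncomm_ring
  have hBB : Bᴴ * B = diagonal (RCLike.ofReal ∘ d) := by
    have := hX.1.star_mul_self_mul_eq_diagonal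
    simp only [hB, conjTranspose_mul, Matrix.star_eq_conjTranspose] at this ⊢
    rw [← this]; noncomm_ring
  -- diagonal bounds
  have hA1 : ∀ i, (star (Aᵀ i) ⬝ᵥ Aᵀ i).re ≤ 1 := by
    intro i
    have hpsd : (Vᴴ * (1 - W * Wᴴ) * V).PosSemidef := hW.conjTranspose_mul_mul_same V
    have hdiag := psd_diag_re_nonneg hpsd i
    have he : (Vᴴ * (1 - W * Wᴴ) * V) i i = 1 - (Aᴴ * A) i i := by
      have : Vᴴ * (1 - W * Wᴴ) * V = 1 - Vᴴ * ((W * Wᴴ) * V) := by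
        have hu : Vᴴ * V = 1 := by
          simpa [Matrix.star_eq_conjTranspose] using mem_unitaryGroup_iff'.mp hVmem
        rw [Matrix.mul_sub, Matrix.sub_mul, mul_one, hu, mul_assoc]
      rw [this, hAA, Matrix.sub_apply, one_apply_eq]
    rw [he] at hdiag
    simp only [Complex.sub_re, Complex.one_re] at hdiag
    rw [← conjTranspose_mul_diag]
    linarith
  have hB1 : ∀ i, (star (Bᵀ i) ⬝ᵥ Bᵀ i).re = d i := by
    intro i
    rw [← conjTranspose_mul_diag, hBB]
    simp
  -- combine
  have h2 : (Aᴴ * B).trace = ∑ i, star (Aᵀ i) ⬝ᵥ Bᵀ i := by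
    rw [trace]
    exact Finset.sum_congr rfl fun i _ => conjTranspose_mul_diag A B i
  rw [h1, h2, Complex.re_sum, traceNorm_eq_sum]
  apply Finset.sum_le_sum
  intro i _
  calc (star (Aᵀ i) ⬝ᵥ Bᵀ i).re
      ≤ Real.sqrt ((star (Aᵀ i) ⬝ᵥ Aᵀ i).re) * Real.sqrt ((star (Bᵀ i) ⬝ᵥ Bᵀ i).re) := cs_dot _ _
    _ ≤ 1 * Real.sqrt (d i) := by
        apply mul_le_mul
        · exact Real.sqrt_le_one.mpr (hA1 i)
        · rw [hB1 i]
        · exact Real.sqrt_nonneg _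
        · exact zero_le_one
    _ = Real.sqrt (d i) := one_mul _
lemma exists_contraction (X : Matrix n n ℂ) :
    ∃ W : Matrix n n ℂ, (1 - W * Wᴴ).PosSemidef ∧ ((W * X).trace).re = traceNorm X := by
  set hX := Matrix.posSemidef_conjTranspose_mul_self X with hhX
  set V : Matrix n n ℂ := (hX.1.eigenvectorUnitary : Matrix n n ℂ) with hV
  have hVmem : V ∈ unitaryGroup n ℂ := hX.1.eigenvectorUnitary.2
  have hVV : star V * V = 1 := mem_unitaryGroup_iff'.mp hVmem
  have hVV' : V * star V = 1 := mem_unitaryGroup_iff.mp hVmem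
  set d := hX.1.eigenvalues with hd
  have hd0 : ∀ i, 0 ≤ d i := fun i => hX.eigenvalues_nonneg i
  have hdiagX : star V * (Xᴴ * X) * V = diagonal (RCLike.ofReal ∘ d) :=
    hX.1.star_mul_self_mul_eq_diagonal
  set c : n → ℂ := fun i => ((Real.sqrt (d i) : ℂ))⁻¹ with hc
  set g : n → ℂ := fun i => if d i = 0 then 0 else 1 with hg
  have hcstar : star c = c := by
    funext i
    simp [hc, ← Complex.ofReal_inv]
  set W : Matrix n n ℂ := V * diagonal c * star V * Xᴴ with hW
  have hWH : Wᴴ = X * (V * diagonal c * star V) := by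
    simp only [hW, Matrix.star_eq_conjTranspose, conjTranspose_mul,
      conjTranspose_conjTranspose, diagonal_conjTranspose, hcstar]
    noncomm_ring
  have hsne : ∀ i, d i ≠ 0 → (Real.sqrt (d i) : ℂ) ≠ 0 := by
    intro i h
    have : Real.sqrt (d i) ≠ 0 :=
      Real.sqrt_ne_zero'.mpr (lt_of_le_of_ne (hd0 i) (Ne.symm h))
    exact_mod_cast Complex.ofReal_ne_zero.mpr this
  have hdsq : ∀ i, ((d i : ℂ)) = (Real.sqrt (d i) : ℂ) * (Real.sqrt (d i) : ℂ) := by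
    intro i
    rw [← Complex.ofReal_mul, Real.mul_self_sqrt (hd0 i)]
  have hWWH : W * Wᴴ = V * diagonal g * star V := by
    rw [hWH, hW]
    have h1 : V * diagonal c * star V * Xᴴ * (X * (V * diagonal c * star V))
        = V * (diagonal c * (star V * (Xᴴ * X) * V) * diagonal c) * star V := by noncomm_ring
    rw [h1, hdiagX, diagonal_mul_diagonal, diagonal_mul_diagonal]
    have hfun : (fun i => c i * (RCLike.ofReal ∘ d) i * c i) = g := by
      funext i
      show c i * ((d i : ℂ)) * c i = g i
      by_cases h : d i = 0
      · simp [hc, hg, h]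
      · simp only [hc, hg, if_neg h]
        field_simp [hdsq i]
        rw [hdsq i, sq]
        exact div_self (mul_ne_zero (hsne i h) (hsne i h))
    rw [hfun]
  have hpsd : (1 - W * Wᴴ).PosSemidef := by
    have e1 : diagonal (fun i => 1 - g i) = (1 : Matrix n n ℂ) - diagonal g := by
      ext i j
      rcases eq_or_ne i j with rfl | hij
      · simp
      · simp [diagonal_apply_ne _ hij, one_apply_ne hij]
    have h1 : (1 : Matrix n n ℂ) - W * Wᴴ = V * diagonal (fun i => 1 - g i) * star V := by
      rw [hWWH, e1, Matrix.mul_sub, Matrix.sub_mul, mul_one, hVV']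
    rw [h1, Matrix.star_eq_conjTranspose]
    apply Matrix.PosSemidef.mul_mul_conjTranspose_same
    refine posSemidef_diagonal_iff.mpr fun i => ?_
    by_cases h : d i = 0 <;> simp [hg, h]
  refine ⟨W, hpsd, ?_⟩
  have htr : (W * X).trace = ∑ i, c i * (RCLike.ofReal ∘ d) i := by
    have h2 : W * X = V * (diagonal c * (star V * (Xᴴ * X) * V)) * star V := by
      rw [hW]
      have h3 : V * (diagonal c * (star V * (Xᴴ * X) * V)) * star V
          = V * diagonal c * star V * Xᴴ * X * (V * star V) := by noncomm_ring
      rw [h3, hVV', mul_one]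
    rw [h2, trace_unitary_conj hVmem, hdiagX, diagonal_mul_diagonal, trace_diagonal]
  rw [htr, traceNorm_eq_sum, Complex.re_sum]
  refine Finset.sum_congr rfl fun i _ => ?_
  rw [← hd]
  by_cases h : d i = 0
  · simp [hc, h]
  · have : c i * (RCLike.ofReal ∘ d) i = (Real.sqrt (d i) : ℂ) := by
      show c i * ((d i : ℂ)) = _
      simp only [hc]
      rw [hdsq i, inv_mul_cancel_left₀ (hsne i h)]
    rw [this]
    simp

lemma psd_trace_re_nonneg {M : Matrix n n ℂ} (hM : M.PosSemidef) : 0 ≤ M.trace.re := by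
  rw [trace, Complex.re_sum]
  exact Finset.sum_nonneg fun i _ => psd_diag_re_nonneg hM i

lemma traceNorm_nonneg (X : Matrix n n ℂ) : 0 ≤ traceNorm X := by
  rw [traceNorm_eq_sum]
  positivity

lemma dot_mulVec_conjTranspose (M : Matrix n n ℂ) (v y : n → ℂ) :
    star v ⬝ᵥ (Mᴴ *ᵥ y) = star (M *ᵥ v) ⬝ᵥ y := by
  rw [dotProduct_mulVec, ← star_mulVec]

lemma quad_conjTranspose_mul (M : Matrix n n ℂ) (v : n → ℂ) :
    star v ⬝ᵥ ((Mᴴ * M) *ᵥ v) = star (M *ᵥ v) ⬝ᵥ (M *ᵥ v) := by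
  rw [← mulVec_mulVec, dot_mulVec_conjTranspose]

lemma contraction_flip {W : Matrix n n ℂ} (hW : (1 - W * Wᴴ).PosSemidef) :
    (1 - Wᴴ * W).PosSemidef := by
  have hcontr : ∀ y, (star (Wᴴ *ᵥ y) ⬝ᵥ (Wᴴ *ᵥ y)).re ≤ (star y ⬝ᵥ y).re := by
    intro y
    have h := hW.dotProduct_mulVec_nonneg y
    have e : star y ⬝ᵥ ((1 - W * Wᴴ) *ᵥ y)
        = star y ⬝ᵥ y - star (Wᴴ *ᵥ y) ⬝ᵥ (Wᴴ *ᵥ y) := by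
      have q := quad_conjTranspose_mul Wᴴ y
      rw [conjTranspose_conjTranspose] at q
      rw [sub_mulVec, one_mulVec, dotProduct_sub, q]
    rw [e] at h
    have := (Complex.le_def.mp h).1
    simp only [Complex.zero_re, Complex.sub_re] at this
    linarith
  apply Matrix.PosSemidef.of_dotProduct_mulVec_nonneg
  · show (1 - Wᴴ * W)ᴴ = 1 - Wᴴ * W
    simp [conjTranspose_sub, conjTranspose_mul]
  · intro x
    have e : star x ⬝ᵥ ((1 - Wᴴ * W) *ᵥ x)
        = star x ⬝ᵥ x - star (W *ᵥ x) ⬝ᵥ (W *ᵥ x) := by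
      rw [sub_mulVec, one_mulVec, dotProduct_sub, quad_conjTranspose_mul]
    rw [e, dot_self_eq_re x, dot_self_eq_re (W *ᵥ x), ← Complex.ofReal_sub]
    rw [Complex.zero_le_real]
    set a := (star (W *ᵥ x) ⬝ᵥ (W *ᵥ x)).re with hadef
    set b := (star x ⬝ᵥ x).re with hbdef
    have ha : 0 ≤ a := dot_self_re_nonneg _
    have hb : 0 ≤ b := dot_self_re_nonneg _
    have h1 : a ≤ Real.sqrt b * Real.sqrt a := by
      have e2 : (star (W *ᵥ x) ⬝ᵥ (W *ᵥ x)) = star x ⬝ᵥ (Wᴴ *ᵥ (W *ᵥ x)) := by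
        rw [dot_mulVec_conjTranspose]
      calc a = (star x ⬝ᵥ (Wᴴ *ᵥ (W *ᵥ x))).re := by rw [hadef, e2]
        _ ≤ Real.sqrt ((star x ⬝ᵥ x).re)
            * Real.sqrt ((star (Wᴴ *ᵥ (W *ᵥ x)) ⬝ᵥ (Wᴴ *ᵥ (W *ᵥ x))).re) := cs_dot _ _
        _ ≤ Real.sqrt b * Real.sqrt a := by
            apply mul_le_mul_of_nonneg_left _ (Real.sqrt_nonneg _)
            exact Real.sqrt_le_sqrt (hcontr (W *ᵥ x))
    nlinarith [Real.mul_self_sqrt ha, Real.mul_self_sqrt hb, Real.sqrt_nonneg a,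
      Real.sqrt_nonneg b]

lemma traceNorm_sub_le (X Y : Matrix n n ℂ) :
    traceNorm X ≤ traceNorm Y + traceNorm (X - Y) := by
  obtain ⟨W, hW, hWX⟩ := exists_contraction X
  have e : W * X = W * Y + W * (X - Y) := by rw [← Matrix.mul_add, add_sub_cancel]
  rw [← hWX, e, trace_add, Complex.add_re]
  exact add_le_add (re_trace_mul_le_traceNorm Y W hW) (re_trace_mul_le_traceNorm (X - Y) W hW)

lemma re_trace_conjTranspose_mul_le (C B : Matrix n n ℂ) :
    ((Cᴴ * B).trace).re
      ≤ Real.sqrt (((Cᴴ * C).trace).re) * Real.sqrt (((Bᴴ * B).trace).re) := by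
  set qC : n → ℝ := fun i => (star (Cᵀ i) ⬝ᵥ Cᵀ i).re with hqC
  set qB : n → ℝ := fun i => (star (Bᵀ i) ⬝ᵥ Bᵀ i).re with hqB
  have hqC0 : ∀ i, 0 ≤ qC i := fun i => dot_self_re_nonneg _
  have hqB0 : ∀ i, 0 ≤ qB i := fun i => dot_self_re_nonneg _
  have hC : ((Cᴴ * C).trace).re = ∑ i, qC i := by
    rw [trace, Complex.re_sum]
    exact Finset.sum_congr rfl fun i _ => congrArg Complex.re (conjTranspose_mul_diag C C i)
  have hB : ((Bᴴ * B).trace).re = ∑ i, qB i := by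
    rw [trace, Complex.re_sum]
    exact Finset.sum_congr rfl fun i _ => congrArg Complex.re (conjTranspose_mul_diag B B i)
  have h1 : ((Cᴴ * B).trace).re ≤ ∑ i, Real.sqrt (qC i) * Real.sqrt (qB i) := by
    rw [trace, Complex.re_sum]
    refine Finset.sum_le_sum fun i _ => ?_
    calc ((Cᴴ * B).diag i).re = (star (Cᵀ i) ⬝ᵥ Bᵀ i).re :=
          congrArg Complex.re (conjTranspose_mul_diag C B i)
      _ ≤ _ := cs_dot _ _
  have h2 : (∑ i, Real.sqrt (qC i) * Real.sqrt (qB i)) ^ 2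
      ≤ (∑ i, qC i) * (∑ i, qB i) := by
    refine Finset.sum_sq_le_sum_mul_sum_of_sq_eq_mul Finset.univ
      (fun i _ => hqC0 i) (fun i _ => hqB0 i) (fun i _ => ?_)
    rw [mul_pow, Real.sq_sqrt (hqC0 i), Real.sq_sqrt (hqB0 i)]
  have hs : ∑ i, Real.sqrt (qC i) * Real.sqrt (qB i)
      ≤ Real.sqrt ((∑ i, qC i) * (∑ i, qB i)) := Real.le_sqrt_of_sq_le h2
  rw [hC, hB, ← Real.sqrt_mul (Finset.sum_nonneg fun i _ => hqC0 i)]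
  exact h1.trans hs

lemma holder_bound (A B : Matrix n n ℂ) :
    traceNorm (A * B)
      ≤ Real.sqrt (((Aᴴ * A).trace).re) * Real.sqrt (((Bᴴ * B).trace).re) := by
  obtain ⟨W, hW, hWX⟩ := exists_contraction (A * B)
  set C : Matrix n n ℂ := Aᴴ * Wᴴ with hCdef
  have e : W * (A * B) = Cᴴ * B := by
    rw [hCdef, conjTranspose_mul, conjTranspose_conjTranspose, conjTranspose_conjTranspose,
      mul_assoc]
  have h1 : traceNorm (A * B)
      ≤ Real.sqrt (((Cᴴ * C).trace).re) * Real.sqrt (((Bᴴ * B).trace).re) := by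
    rw [← hWX, e]
    exact re_trace_conjTranspose_mul_le C B
  have h2 : ((Cᴴ * C).trace).re ≤ ((Aᴴ * A).trace).re := by
    have e2 : Cᴴ * C = W * A * (Aᴴ * Wᴴ) := by
      rw [hCdef, conjTranspose_mul, conjTranspose_conjTranspose, conjTranspose_conjTranspose]
    have e3 : (Cᴴ * C).trace = (Aᴴ * (Wᴴ * W) * A).trace := by
      rw [e2, trace_mul_comm]
      congr 1
      noncomm_ring
    have e4 : Aᴴ * (1 - Wᴴ * W) * A = Aᴴ * A - Aᴴ * (Wᴴ * W) * A := by
      rw [Matrix.mul_sub, Matrix.sub_mul, mul_one]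
    have h5 : 0 ≤ ((Aᴴ * (1 - Wᴴ * W) * A).trace).re :=
      psd_trace_re_nonneg ((contraction_flip hW).conjTranspose_mul_mul_same A)
    rw [e4, trace_sub, Complex.sub_re] at h5
    rw [e3]
    linarith
  refine h1.trans ?_
  apply mul_le_mul_of_nonneg_right _ (Real.sqrt_nonneg _)
  exact Real.sqrt_le_sqrt h2

lemma col_mul (S V : Matrix n n ℂ) (i : n) : (S * V)ᵀ i = S *ᵥ (Vᵀ i) := by
  funext j
  simp [mul_apply, mulVec, dotProduct, transpose_apply]

lemma trace_diagonal_mul (a : n → ℂ) (M : Matrix n n ℂ) :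
    (diagonal a * M).trace = ∑ i, a i * M i i := by
  simp [trace, diag, diagonal_mul]

lemma powers_stormer {A B : Matrix n n ℂ} (hA : A.PosSemidef) (hB : B.PosSemidef) :
    (((A - B) * (A - B)).trace).re ≤ traceNorm (A * A - B * B) := by
  set Δ : Matrix n n ℂ := A - B with hΔdef
  set S : Matrix n n ℂ := A + B with hSdef
  have hΔ : Δ.IsHermitian := hA.1.sub hB.1
  set V : Matrix n n ℂ := (hΔ.eigenvectorUnitary : Matrix n n ℂ) with hV
  have hVmem : V ∈ unitaryGroup n ℂ := hΔ.eigenvectorUnitary.2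
  have hVV : star V * V = 1 := mem_unitaryGroup_iff'.mp hVmem
  have hVV' : V * star V = 1 := mem_unitaryGroup_iff.mp hVmem
  set μ := hΔ.eigenvalues with hμ
  have hΔeq : Δ = V * diagonal (RCLike.ofReal ∘ μ) * star V := hΔ.spectral_theorem
  set sc : n → ℂ := fun i => (if 0 ≤ μ i then (1:ℝ) else -1 : ℝ) with hsc
  have hsc2 : ∀ i, sc i * sc i = 1 := by
    intro i
    by_cases h : 0 ≤ μ i <;> simp [hsc, h]
  have hscμ : ∀ i, sc i * ((μ i : ℝ) : ℂ) = ((|μ i| : ℝ) : ℂ) := by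
    intro i
    by_cases h : 0 ≤ μ i
    · simp [hsc, h, abs_of_nonneg h]
    · push_neg at h
      rw [hsc]
      simp only [if_neg (not_le.mpr h)]
      rw [← Complex.ofReal_mul, abs_of_neg h]
      norm_num
  set W : Matrix n n ℂ := V * diagonal sc * star V with hW
  have hWH : Wᴴ = W := by
    have : star sc = sc := by
      funext i
      simp [hsc, ← Complex.ofReal_neg, apply_ite (star : ℂ → ℂ)]
    simp only [hW, Matrix.star_eq_conjTranspose, conjTranspose_mul,
      conjTranspose_conjTranspose, diagonal_conjTranspose, this]
    noncomm_ring
  have hWW : W * Wᴴ = 1 := by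
    rw [hWH, hW]
    have h1 : V * diagonal sc * star V * (V * diagonal sc * star V)
        = V * (diagonal sc * (star V * V) * diagonal sc) * star V := by noncomm_ring
    rw [h1, hVV, mul_one, diagonal_mul_diagonal]
    have : (fun i => sc i * sc i) = fun _ => (1:ℂ) := funext hsc2
    rw [this, diagonal_one, mul_one, hVV']
  have hcontr : (1 - W * Wᴴ).PosSemidef := by
    rw [hWW, sub_self]
    exact Matrix.PosSemidef.zero
  set P : Matrix n n ℂ := V * diagonal (fun i => ((|μ i| : ℝ) : ℂ)) * star V with hP
  have hWΔ : W * Δ = P := by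
    rw [hW, hΔeq, hP]
    have h1 : V * diagonal sc * star V * (V * diagonal (RCLike.ofReal ∘ μ) * star V)
        = V * (diagonal sc * (star V * V) * diagonal (RCLike.ofReal ∘ μ)) * star V := by
      noncomm_ring
    rw [h1, hVV, mul_one, diagonal_mul_diagonal]
    have e : (fun i => sc i * (RCLike.ofReal ∘ μ) i) = fun i => ((|μ i| : ℝ) : ℂ) :=
      funext fun i => hscμ i
    rw [e]
  have hΔW : Δ * W = P := by
    rw [hW, hΔeq, hP]
    have h1 : V * diagonal (RCLike.ofReal ∘ μ) * star V * (V * diagonal sc * star V)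
        = V * (diagonal (RCLike.ofReal ∘ μ) * (star V * V) * diagonal sc) * star V := by
      noncomm_ring
    rw [h1, hVV, mul_one, diagonal_mul_diagonal]
    have e : (fun i => (RCLike.ofReal ∘ μ) i * sc i) = fun i => ((|μ i| : ℝ) : ℂ) :=
      funext fun i => (mul_comm _ _).trans (hscμ i)
    rw [e]
  have hkey : Δ * S + S * Δ = (A * A - B * B) + (A * A - B * B) := by
    simp only [hΔdef, hSdef]
    noncomm_ring
  -- real part of Tr(W (A²-B²)) equals Tr(P S)
  have htr : ((W * (A * A - B * B)).trace) + ((W * (A * A - B * B)).trace)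
      = (P * S).trace + (P * S).trace := by
    rw [← trace_add, ← Matrix.mul_add, ← hkey, Matrix.mul_add]
    have e1 : W * (Δ * S) = P * S := by rw [← mul_assoc, hWΔ]
    have e2 : (W * (S * Δ)).trace = (P * S).trace := by
      rw [trace_mul_comm, mul_assoc, trace_mul_comm, hΔW, trace_mul_comm]
    rw [trace_add, e1, e2]
  have htr' : ((W * (A * A - B * B)).trace).re = ((P * S).trace).re := by
    have := congrArg Complex.re htr
    simp only [Complex.add_re] at this
    linarith
  -- Tr(P S) = ∑ |μ i| * (VᴴSV)ᵢᵢ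
  have htrPS : ((P * S).trace).re = ∑ i, |μ i| * ((star V * S * V) i i).re := by
    have e1 : (P * S).trace
        = (diagonal (fun i => ((|μ i| : ℝ) : ℂ)) * (star V * S * V)).trace := by
      rw [hP]
      rw [trace_mul_comm]
      have : S * (V * diagonal (fun i => ((|μ i| : ℝ) : ℂ)) * star V)
          = (S * V) * diagonal (fun i => ((|μ i| : ℝ) : ℂ)) * star V := by noncomm_ring
      rw [this, trace_mul_cycle, ← mul_assoc, ← mul_assoc]
      rw [trace_mul_comm, ← mul_assoc]
    rw [e1, trace_diagonal_mul, Complex.re_sum]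
    exact Finset.sum_congr rfl fun i _ => by rw [Complex.re_ofReal_mul]
  -- quadratic form bound
  have hquad : ∀ i, |μ i| ≤ ((star V * S * V) i i).re := by
    intro i
    set v : n → ℂ := Vᵀ i with hv
    have ediag : ∀ M : Matrix n n ℂ, (star V * M * V) i i = star v ⬝ᵥ (M *ᵥ v) := by
      intro M
      rw [Matrix.star_eq_conjTranspose, mul_assoc, conjTranspose_mul_diag, col_mul]
    have eΔ : ((star V * Δ * V) i i) = ((μ i : ℝ) : ℂ) := by
      rw [hΔ.star_mul_self_mul_eq_diagonal]
      simp [hμ]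
    have h1 : 0 ≤ (star v ⬝ᵥ ((S - Δ) *ᵥ v)).re := by
      have hpsd : (S - Δ).PosSemidef := by
        have : S - Δ = B + B := by rw [hSdef, hΔdef]; abel
        rw [this]; exact hB.add hB
      exact (Complex.le_def.mp (hpsd.dotProduct_mulVec_nonneg v)).1
    have h2 : 0 ≤ (star v ⬝ᵥ ((S + Δ) *ᵥ v)).re := by
      have hpsd : (S + Δ).PosSemidef := by
        have : S + Δ = A + A := by rw [hSdef, hΔdef]; abel
        rw [this]; exact hA.add hA
      exact (Complex.le_def.mp (hpsd.dotProduct_mulVec_nonneg v)).1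
    rw [sub_mulVec, dotProduct_sub, Complex.sub_re, ← ediag, ← ediag, eΔ] at h1
    rw [add_mulVec, dotProduct_add, Complex.add_re, ← ediag, ← ediag, eΔ] at h2
    simp only [Complex.ofReal_re] at h1 h2
    rw [abs_le]
    constructor <;> linarith
  -- LHS = ∑ μ i ^ 2
  have hLHS : ((Δ * Δ).trace).re = ∑ i, μ i ^ 2 := by
    have e1 : Δ * Δ = V * diagonal (fun i => (RCLike.ofReal ∘ μ) i * (RCLike.ofReal ∘ μ) i) * star V := by
      rw [hΔeq]
      have h1 : V * diagonal (RCLike.ofReal ∘ μ) * star V * (V * diagonal (RCLike.ofReal ∘ μ) * star V)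
          = V * (diagonal (RCLike.ofReal ∘ μ) * (star V * V) * diagonal (RCLike.ofReal ∘ μ)) * star V := by
        noncomm_ring
      rw [h1, hVV, mul_one, diagonal_mul_diagonal]
    rw [e1, trace_unitary_conj hVmem, trace_diagonal]
    rw [Complex.re_sum]
    refine Finset.sum_congr rfl fun i _ => ?_
    show (((μ i : ℝ) : ℂ) * ((μ i : ℝ) : ℂ)).re = _
    rw [← Complex.ofReal_mul]
    simp [sq]
  calc ((Δ * Δ).trace).re = ∑ i, μ i ^ 2 := hLHS
    _ ≤ ∑ i, |μ i| * ((star V * S * V) i i).re := by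
        refine Finset.sum_le_sum fun i _ => ?_
        have : μ i ^ 2 = |μ i| * |μ i| := by rw [← sq_abs, sq]
        rw [this]
        exact mul_le_mul_of_nonneg_left (hquad i) (abs_nonneg _)
    _ = ((P * S).trace).re := htrPS.symm
    _ = ((W * (A * A - B * B)).trace).re := htr'.symm
    _ ≤ traceNorm (A * A - B * B) := re_trace_mul_le_traceNorm _ _ hcontr

lemma sqrt_congr {A B : Matrix n n ℂ} (h : A = B) (hA : A.PosSemidef) (hB : B.PosSemidef) :
    posSemidefSqrt hA = posSemidefSqrt hB := by subst h; rfl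

lemma traceNorm_neg (X : Matrix n n ℂ) : traceNorm (-X) = traceNorm X := by
  unfold traceNorm
  rw [sqrt_congr (show (-X)ᴴ * (-X) = Xᴴ * X by simp)
    (Matrix.posSemidef_conjTranspose_mul_self (-X)) (Matrix.posSemidef_conjTranspose_mul_self X)]


end Aux

set_option maxHeartbeats 1000000 in
/-- Continuity bound for the fidelity in its second argument, for sub-normalized states. -/
theorem fidelity_continuity {n : Type*} [Fintype n] [DecidableEq n]
    (ρ σ σ' : Matrix n n ℂ) (hρ : ρ.PosSemidef) (hσ : σ.PosSemidef) (hσ' : σ'.PosSemidef)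
    (hρ1 : ρ.trace.re ≤ 1) (hσ1 : σ.trace.re ≤ 1) (hσ'1 : σ'.trace.re ≤ 1) :
    |fidelity ρ σ - fidelity ρ σ'| ≤
        2 * |Real.sqrt (fidelity ρ σ) - Real.sqrt (fidelity ρ σ')| ∧
      2 * |Real.sqrt (fidelity ρ σ) - Real.sqrt (fidelity ρ σ')| ≤
        2 * Real.sqrt (traceNorm (σ - σ')) := by
  have hRρ : msqrt ρ = posSemidefSqrt hρ := dif_pos hρ
  have hRσ : msqrt σ = posSemidefSqrt hσ := dif_pos hσ
  have hRσ' : msqrt σ' = posSemidefSqrt hσ' := dif_pos hσ'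
  set R := posSemidefSqrt hρ with hRdef
  set S := posSemidefSqrt hσ with hSdef
  set S' := posSemidefSqrt hσ' with hS'def
  set a := traceNorm (R * S) with hadef
  set a' := traceNorm (R * S') with ha'def
  have hfσ : fidelity ρ σ = a ^ 2 := by rw [fidelity, hRρ, hRσ]
  have hfσ' : fidelity ρ σ' = a' ^ 2 := by rw [fidelity, hRρ, hRσ']
  have ha0 : 0 ≤ a := traceNorm_nonneg _
  have ha'0 : 0 ≤ a' := traceNorm_nonneg _
  have hfrobR : ((Rᴴ * R).trace).re = ρ.trace.re := by
    rw [hρ.posSemidef_sqrt.1, hρ.sqrt_mul_self]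
  have hfrobS : ((Sᴴ * S).trace).re = σ.trace.re := by
    rw [hσ.posSemidef_sqrt.1, hσ.sqrt_mul_self]
  have hfrobS' : ((S'ᴴ * S').trace).re = σ'.trace.re := by
    rw [hσ'.posSemidef_sqrt.1, hσ'.sqrt_mul_self]
  have hsqR : Real.sqrt (ρ.trace.re) ≤ 1 := Real.sqrt_le_one.mpr hρ1
  have ha1 : a ≤ 1 := by
    calc a ≤ Real.sqrt (((Rᴴ * R).trace).re) * Real.sqrt (((Sᴴ * S).trace).re) :=
          holder_bound R S
      _ ≤ 1 * 1 := by
          rw [hfrobR, hfrobS]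
          exact mul_le_mul hsqR (Real.sqrt_le_one.mpr hσ1) (Real.sqrt_nonneg _) zero_le_one
      _ = 1 := one_mul 1
  have ha'1 : a' ≤ 1 := by
    calc a' ≤ Real.sqrt (((Rᴴ * R).trace).re) * Real.sqrt (((S'ᴴ * S').trace).re) :=
          holder_bound R S'
      _ ≤ 1 * 1 := by
          rw [hfrobR, hfrobS']
          exact mul_le_mul hsqR (Real.sqrt_le_one.mpr hσ'1) (Real.sqrt_nonneg _) zero_le_one
      _ = 1 := one_mul 1
  -- key bound on |a - a'|
  have hSsub : (S - S')ᴴ = S - S' := by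
    rw [conjTranspose_sub, hσ.posSemidef_sqrt.1, hσ'.posSemidef_sqrt.1]
  have hps : (((S - S') * (S - S')).trace).re ≤ traceNorm (σ - σ') := by
    have h := powers_stormer hσ.posSemidef_sqrt hσ'.posSemidef_sqrt
    rwa [hσ.sqrt_mul_self, hσ'.sqrt_mul_self] at h
  have hbound : traceNorm (R * S - R * S') ≤ Real.sqrt (traceNorm (σ - σ')) := by
    rw [← Matrix.mul_sub]
    calc traceNorm (R * (S - S'))
        ≤ Real.sqrt (((Rᴴ * R).trace).re) * Real.sqrt ((((S - S')ᴴ * (S - S')).trace).re) :=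
          holder_bound R (S - S')
      _ ≤ 1 * Real.sqrt (traceNorm (σ - σ')) := by
          apply mul_le_mul
          · rw [hfrobR]; exact hsqR
          · apply Real.sqrt_le_sqrt
            rw [hSsub]
            exact hps
          · exact Real.sqrt_nonneg _
          · exact zero_le_one
      _ = Real.sqrt (traceNorm (σ - σ')) := one_mul _
  have hbound' : traceNorm (R * S' - R * S) ≤ Real.sqrt (traceNorm (σ - σ')) := by
    have : R * S' - R * S = -(R * S - R * S') := (neg_sub _ _).symm
    rw [this, traceNorm_neg]
    exact hbound
  have hdiff : |a - a'| ≤ Real.sqrt (traceNorm (σ - σ')) := by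
    rw [abs_sub_le_iff]
    constructor
    · have h := traceNorm_sub_le (R * S) (R * S')
      rw [← hadef, ← ha'def] at h
      linarith
    · have h := traceNorm_sub_le (R * S') (R * S)
      rw [← hadef, ← ha'def] at h
      linarith
  have hsqrta : Real.sqrt (fidelity ρ σ) = a := by rw [hfσ, Real.sqrt_sq ha0]
  have hsqrta' : Real.sqrt (fidelity ρ σ') = a' := by rw [hfσ', Real.sqrt_sq ha'0]
  constructor
  · rw [hsqrta, hsqrta', hfσ, hfσ']
    have e : a ^ 2 - a' ^ 2 = (a + a') * (a - a') := by ring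
    rw [e, abs_mul]
    have h2 : |a + a'| ≤ 2 := by
      rw [abs_of_nonneg (add_nonneg ha0 ha'0)]
      linarith
    exact mul_le_mul_of_nonneg_right h2 (abs_nonneg _)
  · rw [hsqrta, hsqrta']
    have := mul_le_mul_of_nonneg_left hdiff (by norm_num : (0:ℝ) ≤ 2)
    linarith
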